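/- Let Λ be a non-ordinary numerical semigroup with multiplicity m = m(Λ) and ω = ω(Λ), and let σ be a right generator of Λ with σ ≡ 0 (mod ω). Set ω̃ = ω(Λ ∖ {σ}). Then σ is a strong generator of Λ if and only if either σ + m ≢ 0 (mod ω̃), or σ + m ≡ 0 (mod ω̃) and (σ + m)/ω̃ ∉ shrink(Λ ∖ {σ}). -/

import Mathlib

open Pointwise

namespace NumSgpPaper

/-- `S` is a numerical semigroup: an additive submonoid of ℕ with finite complement. -/
structure IsNumSgp (S : Set ℕ) : Prop where
  zero_mem : 0 ∈ S
  add_mem : ∀ ⦃a b : ℕ⦄, a ∈ S → b ∈ S → a + b ∈ S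
  cofinite : Sᶜ.Finite

/-- The Frobenius number: the largest gap of `S` (junk value `0` if there are no gaps). -/
noncomputable def frob (S : Set ℕ) : ℕ := sSup Sᶜ

open Classical in
/-- The conductor: one plus the largest gap, and `0` if there are no gaps (so `c(ℕ) = 0`). -/
noncomputable def conductor (S : Set ℕ) : ℕ := if Sᶜ = ∅ then 0 else frob S + 1

/-- The genus: the number of gaps. -/
noncomputable def genus (S : Set ℕ) : ℕ := Sᶜ.ncard

/-- The multiplicity: the smallest positive element. -/
noncomputable def mult (S : Set ℕ) : ℕ := sInf {n : ℕ | n ∈ S ∧ 0 < n}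

/-- The jump: the difference between the second and first positive elements. -/
noncomputable def jump (S : Set ℕ) : ℕ := sInf {n : ℕ | n ∈ S ∧ mult S < n} - mult S

/-- A minimal generator: a positive element of `S` that is not the sum of
two positive elements of `S`. -/
def IsMinGen (S : Set ℕ) (x : ℕ) : Prop :=
  0 < x ∧ x ∈ S ∧ ¬ ∃ a b : ℕ, 0 < a ∧ 0 < b ∧ a ∈ S ∧ b ∈ S ∧ a + b = x

/-- A right generator: a minimal generator larger than the Frobenius number. -/
def IsRightGen (S : Set ℕ) (x : ℕ) : Prop := IsMinGen S x ∧ frob S < x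

/-- A strong generator: a right generator `σ` such that `σ + m(S)` is a minimal
generator of `S \ {σ}`. -/
def IsStrongGen (S : Set ℕ) (σ : ℕ) : Prop :=
  IsRightGen S σ ∧ IsMinGen (S \ {σ}) (σ + mult S)

/-- `S` is ordinary when its gaps are exactly `{1, …, g(S)}`. -/
def IsOrdinary (S : Set ℕ) : Prop := Sᶜ = Set.Icc 1 (genus S)

/-- The left elements: the elements of `S` smaller than the Frobenius number. -/
def leftEls (S : Set ℕ) : Set ℕ := {x : ℕ | x ∈ S ∧ x < frob S}

/-- The gcd of a set of natural numbers. -/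
noncomputable def setGcd (A : Set ℕ) : ℕ :=
  sInf {d : ℕ | (∀ a ∈ A, d ∣ a) ∧ ∀ e : ℕ, (∀ a ∈ A, e ∣ a) → e ∣ d}

/-- `ω(S)`: the gcd of the left elements of `S`. -/
noncomputable def omega' (S : Set ℕ) : ℕ := setGcd (leftEls S)

/-- The shrinking of `S`: the additive submonoid of ℕ generated by the left
elements divided by their gcd. -/
noncomputable def shrink (S : Set ℕ) : Set ℕ :=
  (AddSubmonoid.closure ((fun x => x / omega' S) '' leftEls S) : AddSubmonoid ℕ)

/-- `T` is a descendant of `S`: a numerical semigroup contained in `S` all of whose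
missing elements lie beyond the Frobenius number of `S`. -/
def IsDescendant (S T : Set ℕ) : Prop :=
  IsNumSgp T ∧ T ⊆ S ∧ ∀ x ∈ S \ T, frob S < x

/-- The pseudo-ordinary semigroup `P_{m,u} = {0, m} ∪ {n : n ≥ m + u}`. -/
def P (m u : ℕ) : Set ℕ := {0, m} ∪ {n : ℕ | m + u ≤ n}

/-- The submonoid of ℕ generated by the interval `{a, …, b}`. -/
def intervalSgp (a b : ℕ) : Set ℕ := (AddSubmonoid.closure (Set.Icc a b) : AddSubmonoid ℕ)


lemma setGcd_spec (A : Set ℕ) :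
    (∀ a ∈ A, setGcd A ∣ a) ∧ ∀ e : ℕ, (∀ a ∈ A, e ∣ a) → e ∣ setGcd A := by
  have hne : {d : ℕ | (∀ a ∈ A, d ∣ a) ∧ ∀ e : ℕ, (∀ a ∈ A, e ∣ a) → e ∣ d}.Nonempty := by
    obtain ⟨g, hg⟩ := (IsPrincipalIdealRing.principal (Ideal.span ((↑) '' A : Set ℤ)))
    refine ⟨g.natAbs, fun a ha => ?_, fun e he => ?_⟩
    · have hmem : (a : ℤ) ∈ Ideal.span ((↑) '' A : Set ℤ) :=
        Ideal.subset_span ⟨a, ha, rfl⟩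
      rw [hg] at hmem
      rw [show Submodule.span ℤ {g} = Ideal.span {g} from rfl,
        Ideal.mem_span_singleton] at hmem
      have := Int.natAbs_dvd_natAbs.mpr hmem
      simpa using this
    · have hgmem : g ∈ Ideal.span ((↑) '' A : Set ℤ) := by
        rw [hg]; exact Submodule.mem_span_singleton_self g
      have hle : Ideal.span ((↑) '' A : Set ℤ) ≤ Ideal.span {(e : ℤ)} := by
        rw [Ideal.span_le]
        rintro x ⟨a, ha, rfl⟩
        rw [SetLike.mem_coe, Ideal.mem_span_singleton]
        exact_mod_cast he a ha
      have : (e : ℤ) ∣ g := Ideal.mem_span_singleton.mp (hle hgmem)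
      have := Int.natAbs_dvd_natAbs.mpr this
      simpa using this
  exact Nat.sInf_mem hne


/-- A right generator `σ` of a non-ordinary semigroup `Λ` with `ω(Λ) ∣ σ` is strong
iff either `ω̃ ∤ σ + m`, or `ω̃ ∣ σ + m` and `(σ + m)/ω̃ ∉ shrink(Λ \ {σ})`,
where `ω̃ = ω(Λ \ {σ})`. -/
theorem stmt7 (Λ : Set ℕ) (h : IsNumSgp Λ) (hord : ¬ IsOrdinary Λ)
    (σ : ℕ) (hσ : IsRightGen Λ σ) (hmod : omega' Λ ∣ σ) :
    IsStrongGen Λ σ ↔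
      (¬ omega' (Λ \ {σ}) ∣ (σ + mult Λ)) ∨
      (omega' (Λ \ {σ}) ∣ (σ + mult Λ) ∧
        (σ + mult Λ) / omega' (Λ \ {σ}) ∉ shrink (Λ \ {σ})) := by
  classical
  obtain ⟨⟨hσpos, hσmem, hσnot⟩, hσF⟩ := hσ
  set Λ' := Λ \ {σ} with hΛ'
  -- the complement of Λ is nonempty
  have hcne : Λᶜ.Nonempty := by
    rw [Set.nonempty_iff_ne_empty]
    intro hemp
    apply hord
    rw [IsOrdinary, genus, hemp]
    simp
  have hbdd : BddAbove Λᶜ := h.cofinite.bddAbove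
  have hFgap : frob Λ ∉ Λ := Nat.sSup_mem hcne hbdd
  have hgt : ∀ n, frob Λ < n → n ∈ Λ := by
    intro n hn
    by_contra hn'
    exact absurd (le_csSup hbdd hn') (not_le.mpr hn)
  have hle : ∀ n, n ∉ Λ → n ≤ frob Λ := fun n hn => le_csSup hbdd hn
  -- Λ non-ordinary has a small positive element
  have hsmall : ∃ x, x ∈ Λ ∧ 0 < x ∧ x < frob Λ := by
    by_contra hc
    push_neg at hc
    apply hord
    have hceq : Λᶜ = Set.Icc 1 (frob Λ) := by
      ext x
      simp only [Set.mem_compl_iff, Set.mem_Icc]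
      constructor
      · intro hx
        refine ⟨?_, hle x hx⟩
        rcases Nat.eq_zero_or_pos x with h0 | h0
        · exact absurd (h0 ▸ h.zero_mem) hx
        · exact h0
      · rintro ⟨h1, h2⟩ hx
        have h3 := hc x hx (by omega)
        have : x = frob Λ := le_antisymm h2 h3
        exact hFgap (this ▸ hx)
    have hgen : genus Λ = frob Λ := by
      rw [genus, hceq, show (Set.Icc 1 (frob Λ)) = ↑(Finset.Icc 1 (frob Λ)) by simp,
        Set.ncard_coe_finset]
      simp
    rw [IsOrdinary, hceq, hgen]
  obtain ⟨x0, hx0Λ, hx0pos, hx0F⟩ := hsmall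
  have hmne : {n : ℕ | n ∈ Λ ∧ 0 < n}.Nonempty := ⟨x0, hx0Λ, hx0pos⟩
  have hm : mult Λ ∈ Λ ∧ 0 < mult Λ := Nat.sInf_mem hmne
  have hmΛ : mult Λ ∈ Λ := hm.1
  have hmpos : 0 < mult Λ := hm.2
  have hmmin : ∀ x ∈ Λ, 0 < x → mult Λ ≤ x := fun x hx hxp => Nat.sInf_le ⟨hx, hxp⟩
  have hmF : mult Λ < frob Λ := lt_of_le_of_lt (hmmin x0 hx0Λ hx0pos) hx0F
  have hmσ : mult Λ < σ := hmF.trans hσF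
  -- Λ' is closed under addition and contains 0
  have h0' : (0:ℕ) ∈ Λ' := ⟨h.zero_mem, by simp; omega⟩
  have hadd' : ∀ a b : ℕ, a ∈ Λ' → b ∈ Λ' → a + b ∈ Λ' := by
    rintro a b ⟨ha, ha'⟩ ⟨hb, hb'⟩
    refine ⟨h.add_mem ha hb, ?_⟩
    simp only [Set.mem_singleton_iff] at *
    intro hab
    rcases Nat.eq_zero_or_pos a with h0 | h0
    · subst h0; rw [zero_add] at hab; exact hb' hab
    rcases Nat.eq_zero_or_pos b with h0b | h0b
    · subst h0b; rw [add_zero] at hab; exact ha' hab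
    exact hσnot ⟨a, b, h0, h0b, ha, hb, hab⟩
  -- frob Λ' = σ
  have hcompl' : Λ'ᶜ = Λᶜ ∪ {σ} := by
    ext x
    simp only [hΛ', Set.mem_compl_iff, Set.mem_diff, Set.mem_union, Set.mem_singleton_iff]
    tauto
  have hbdd' : BddAbove Λ'ᶜ := by
    rw [hcompl']; exact (h.cofinite.union (Set.finite_singleton σ)).bddAbove
  have hfrob' : frob Λ' = σ := by
    apply le_antisymm
    · apply csSup_le ⟨σ, by rw [hcompl']; right; rfl⟩
      intro x hx
      rw [hcompl'] at hx
      rcases hx with hx | hx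
      · exact le_of_lt (lt_of_le_of_lt (hle x hx) hσF)
      · simp only [Set.mem_singleton_iff] at hx; omega
    · exact le_csSup hbdd' (by rw [hcompl']; right; rfl)
  have hLdef : leftEls Λ' = {x : ℕ | x ∈ Λ' ∧ x < σ} := by rw [leftEls, hfrob']
  -- properties of ω̃
  have hw1 : ∀ a ∈ leftEls Λ', omega' Λ' ∣ a := (setGcd_spec (leftEls Λ')).1
  have hmL : mult Λ ∈ leftEls Λ' := by
    rw [hLdef]
    exact ⟨⟨hmΛ, by simp only [Set.mem_singleton_iff]; omega⟩, hmσ⟩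
  have hwm : omega' Λ' ∣ mult Λ := hw1 _ hmL
  have hwpos : 0 < omega' Λ' := by
    rcases Nat.eq_zero_or_pos (omega' Λ') with h0 | h0
    · rw [h0, zero_dvd_iff] at hwm; omega
    · exact h0
  -- the closure of the left elements of Λ'
  set C := (AddSubmonoid.closure (leftEls Λ') : AddSubmonoid ℕ) with hC
  -- multiplication by ω̃ maps shrink Λ' onto C
  have himg : (⇑(AddMonoidHom.mulLeft (omega' Λ'))) ''
      ((fun x => x / omega' Λ') '' leftEls Λ') = leftEls Λ' := by
    ext y
    constructor
    · rintro ⟨_, ⟨a, haL, rfl⟩, rfl⟩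
      simpa [AddMonoidHom.coe_mulLeft, Nat.mul_div_cancel' (hw1 a haL)] using haL
    · intro hy
      exact ⟨y / omega' Λ', ⟨y, hy, rfl⟩, Nat.mul_div_cancel' (hw1 y hy)⟩
  have hmap : AddSubmonoid.map (AddMonoidHom.mulLeft (omega' Λ'))
      (AddSubmonoid.closure ((fun x => x / omega' Λ') '' leftEls Λ')) = C := by
    rw [AddMonoidHom.map_mclosure, himg]
  have hkey : ∀ n : ℕ, (omega' Λ' ∣ n ∧ n / omega' Λ' ∈ shrink Λ') ↔ n ∈ C := by
    intro n
    constructor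
    · rintro ⟨hdvd, hmem⟩
      rw [← hmap]
      exact ⟨n / omega' Λ', hmem, Nat.mul_div_cancel' hdvd⟩
    · intro hn
      rw [← hmap] at hn
      obtain ⟨k, hk, hkn⟩ := hn
      have hkn' : omega' Λ' * k = n := hkn
      have hdvd : omega' Λ' ∣ n := ⟨k, hkn'.symm⟩
      refine ⟨hdvd, ?_⟩
      rw [← hkn', Nat.mul_div_cancel_left _ hwpos]
      exact hk
  -- decompositions give membership in C
  have hdec : ∀ a b : ℕ, 0 < a → 0 < b → a ∈ Λ' → b ∈ Λ' → a + b = σ + mult Λ →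
      (σ + mult Λ : ℕ) ∈ C := by
    have key : ∀ a b : ℕ, 0 < a → 0 < b → a ∈ Λ' → b ∈ Λ' → a ≤ b →
        a + b = σ + mult Λ → (σ + mult Λ : ℕ) ∈ C := by
      intro a b hapos hbpos haΛ hbΛ hab heq
      have haσ : a ≠ σ := fun hh => haΛ.2 (by simp [hh])
      have hbσ : b ≠ σ := fun hh => hbΛ.2 (by simp [hh])
      have haltσ : a < σ := by omega
      have hbcase : b < σ ∨ σ < b := by omega
      rcases hbcase with hb | hb
      · rw [← heq]
        exact C.add_mem (AddSubmonoid.subset_closure (by rw [hLdef]; exact ⟨haΛ, haltσ⟩))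
          (AddSubmonoid.subset_closure (by rw [hLdef]; exact ⟨hbΛ, hb⟩))
      · have := hmmin a haΛ.1 hapos
        omega
    intro a b hapos hbpos haΛ hbΛ heq
    rcases le_total a b with hab | hab
    · exact key a b hapos hbpos haΛ hbΛ hab heq
    · exact key b a hbpos hapos hbΛ haΛ hab (by omega)
  -- membership in C gives a decomposition
  have hCd : (σ + mult Λ : ℕ) ∈ C →
      ∃ a b : ℕ, 0 < a ∧ 0 < b ∧ a ∈ Λ' ∧ b ∈ Λ' ∧ a + b = σ + mult Λ := by
    intro hmem
    have ind : ∀ x : ℕ, ∀ hx : x ∈ C, x ∈ Λ' ∧ (x = 0 ∨ x ∈ leftEls Λ' ∨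
        ∃ a b : ℕ, 0 < a ∧ 0 < b ∧ a ∈ Λ' ∧ b ∈ Λ' ∧ a + b = x) := by
      intro x hx
      refine AddSubmonoid.closure_induction
        (motive := fun x _ => x ∈ Λ' ∧ (x = 0 ∨ x ∈ leftEls Λ' ∨
          ∃ a b : ℕ, 0 < a ∧ 0 < b ∧ a ∈ Λ' ∧ b ∈ Λ' ∧ a + b = x))
        (fun y hy => ⟨by rw [hLdef] at hy; exact hy.1, Or.inr (Or.inl hy)⟩)
        ⟨h0', Or.inl rfl⟩
        (fun x y hxC hyC pxh pyh => ?_) hx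
      obtain ⟨hxΛ, hxd⟩ := pxh
      obtain ⟨hyΛ, hyd⟩ := pyh
      refine ⟨hadd' x y hxΛ hyΛ, ?_⟩
      rcases Nat.eq_zero_or_pos x with h0 | h0
      · subst h0; rw [zero_add]; exact hyd
      rcases Nat.eq_zero_or_pos y with h0y | h0y
      · subst h0y; rw [add_zero]; exact hxd
      · exact Or.inr (Or.inr ⟨x, y, h0, h0y, hxΛ, hyΛ, rfl⟩)
    obtain ⟨_, hd⟩ := ind _ hmem
    rcases hd with h0 | hL | hdone
    · omega
    · rw [hLdef] at hL
      exact absurd hL.2 (by omega)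
    · exact hdone
  -- σ + m ∈ Λ'
  have hsm' : (σ + mult Λ : ℕ) ∈ Λ' :=
    ⟨hgt _ (by omega), by simp only [Set.mem_singleton_iff]; omega⟩
  -- assemble
  constructor
  · intro hs
    obtain ⟨_, hmg⟩ := hs
    by_cases hdvd : omega' Λ' ∣ (σ + mult Λ)
    · right
      refine ⟨hdvd, fun hsh => ?_⟩
      obtain ⟨a, b, ha, hb, haΛ, hbΛ, heq⟩ := hCd ((hkey (σ + mult Λ)).1 ⟨hdvd, hsh⟩)
      exact hmg.2.2 ⟨a, b, ha, hb, haΛ, hbΛ, heq⟩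
    · left; exact hdvd
  · intro hrhs
    refine ⟨⟨⟨hσpos, hσmem, hσnot⟩, hσF⟩, ⟨by omega, hsm', ?_⟩⟩
    rintro ⟨a, b, ha, hb, haΛ, hbΛ, heq⟩
    have hmemC := hdec a b ha hb haΛ hbΛ heq
    have hk := (hkey (σ + mult Λ)).2 hmemC
    rcases hrhs with hnd | ⟨_, hns⟩
    · exact hnd hk.1
    · exact hns hk.2


end NumSgpPaper
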